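/- Fix K > 0. For each integer n ≥ 1 define f_n(b) := ψ(b)/ψ'(b) − φ_{nK}(b)/φ_{nK}'(b) for b ≥ 0, and define the equilibrium threshold b̂(n) as follows: if φ_{nK}'(0) < −r/K then b̂(n) is the unique positive solution of f_n(b) = K/r, and otherwise b̂(n) := 0. Then the sequence n ↦ b̂(n) is nonincreasing, and there exists an integer n̄ such that b̂(n) > 0 for all n < n̄ and b̂(n) = 0 for all n ≥ n̄. -/

import Mathlib

open Set Filter



lemma my_deriv_nonneg_right {f : ℝ → ℝ} {x : ℝ} (hf : DifferentiableAt ℝ f x)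
    (h : ∀ᶠ y in nhdsWithin x (Ioi x), f x ≤ f y) : 0 ≤ deriv f x := by
  have h1 : Tendsto (slope f x) (nhdsWithin x {x}ᶜ) (nhds (deriv f x)) :=
    hasDerivAt_iff_tendsto_slope.1 hf.hasDerivAt
  have h2 : Tendsto (slope f x) (nhdsWithin x (Ioi x)) (nhds (deriv f x)) :=
    h1.mono_left (nhdsWithin_mono x (fun y hy => ne_of_gt hy))
  refine ge_of_tendsto h2 ?_
  filter_upwards [h, self_mem_nhdsWithin] with y hy hy'
  have hxy : x < y := hy'
  rw [slope_def_field]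
  exact div_nonneg (by linarith) (by linarith)

lemma my_deriv_nonpos_right {f : ℝ → ℝ} {x : ℝ} (hf : DifferentiableAt ℝ f x)
    (h : ∀ᶠ y in nhdsWithin x (Ioi x), f y ≤ f x) : deriv f x ≤ 0 := by
  have h1 : Tendsto (slope f x) (nhdsWithin x {x}ᶜ) (nhds (deriv f x)) :=
    hasDerivAt_iff_tendsto_slope.1 hf.hasDerivAt
  have h2 : Tendsto (slope f x) (nhdsWithin x (Ioi x)) (nhds (deriv f x)) :=
    h1.mono_left (nhdsWithin_mono x (fun y hy => ne_of_gt hy))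
  refine le_of_tendsto h2 ?_
  filter_upwards [h, self_mem_nhdsWithin] with y hy hy'
  have hxy : x < y := hy'
  rw [slope_def_field]
  exact div_nonpos_of_nonpos_of_nonneg (by linarith) (by linarith)

lemma my_deriv_nonneg_left {f : ℝ → ℝ} {x : ℝ} (hf : DifferentiableAt ℝ f x)
    (h : ∀ᶠ y in nhdsWithin x (Iio x), f y ≤ f x) : 0 ≤ deriv f x := by
  have h1 : Tendsto (slope f x) (nhdsWithin x {x}ᶜ) (nhds (deriv f x)) :=
    hasDerivAt_iff_tendsto_slope.1 hf.hasDerivAt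
  have h2 : Tendsto (slope f x) (nhdsWithin x (Iio x)) (nhds (deriv f x)) :=
    h1.mono_left (nhdsWithin_mono x (fun y hy => ne_of_lt hy))
  refine ge_of_tendsto h2 ?_
  filter_upwards [h, self_mem_nhdsWithin] with y hy hy'
  have hxy : y < x := hy'
  rw [slope_def_field, div_nonneg_iff]
  right
  constructor <;> linarith

lemma my_cd2 {f : ℝ → ℝ} (h : ContDiff ℝ 2 f) :
    Differentiable ℝ f ∧ Differentiable ℝ (deriv f) ∧ Continuous (deriv (deriv f)) := by
  rw [show (2 : WithTop ℕ∞) = 1 + 1 by norm_num, contDiff_succ_iff_deriv] at h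
  obtain ⟨hd, -, h1⟩ := h
  rw [contDiff_one_iff_deriv] at h1
  exact ⟨hd, h1.1, h1.2⟩

lemma my_deriv_lt_right {f : ℝ → ℝ} (hf : ContDiff ℝ 2 f) {x δ : ℝ} (hδ : 0 < δ)
    (h2 : 0 < deriv (deriv f) x) : ∃ y ∈ Ioo x (x + δ), deriv f x < deriv f y := by
  obtain ⟨-, hd1, hc2⟩ := my_cd2 hf
  have hnbhd : ∀ᶠ y in nhds x, 0 < deriv (deriv f) y :=
    ContinuousAt.eventually_lt continuousAt_const hc2.continuousAt h2
  obtain ⟨ε, hε, hball⟩ := Metric.eventually_nhds_iff_ball.1 hnbhd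
  set ε' := min ε δ with hε'
  have hε'pos : 0 < ε' := lt_min hε hδ
  have hmono : StrictMonoOn (deriv f) (Ioo (x - ε') (x + ε')) := by
    apply strictMonoOn_of_deriv_pos (convex_Ioo _ _) hd1.continuous.continuousOn
    intro y hy
    rw [interior_Ioo] at hy
    apply hball
    rw [Metric.mem_ball, Real.dist_eq, abs_lt]
    have h1 := hy.1; have h2 := hy.2
    have : ε' ≤ ε := min_le_left _ _
    constructor <;> linarith
  refine ⟨x + ε' / 2, ⟨by linarith, by have : ε' ≤ δ := min_le_right _ _; linarith⟩, ?_⟩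
  exact hmono ⟨by linarith, by linarith⟩ ⟨by linarith, by linarith⟩ (by linarith)

lemma my_deriv_lt_left {f : ℝ → ℝ} (hf : ContDiff ℝ 2 f) {x δ : ℝ} (hδ : 0 < δ)
    (h2 : 0 < deriv (deriv f) x) : ∃ y ∈ Ioo (x - δ) x, deriv f y < deriv f x := by
  obtain ⟨-, hd1, hc2⟩ := my_cd2 hf
  have hnbhd : ∀ᶠ y in nhds x, 0 < deriv (deriv f) y :=
    ContinuousAt.eventually_lt continuousAt_const hc2.continuousAt h2
  obtain ⟨ε, hε, hball⟩ := Metric.eventually_nhds_iff_ball.1 hnbhd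
  set ε' := min ε δ with hε'
  have hε'pos : 0 < ε' := lt_min hε hδ
  have hmono : StrictMonoOn (deriv f) (Ioo (x - ε') (x + ε')) := by
    apply strictMonoOn_of_deriv_pos (convex_Ioo _ _) hd1.continuous.continuousOn
    intro y hy
    rw [interior_Ioo] at hy
    apply hball
    rw [Metric.mem_ball, Real.dist_eq, abs_lt]
    have h1 := hy.1; have h2 := hy.2
    have : ε' ≤ ε := min_le_left _ _
    constructor <;> linarith
  refine ⟨x - ε' / 2, ⟨by have : ε' ≤ δ := min_le_right _ _; linarith, by linarith⟩, ?_⟩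
  exact hmono ⟨by linarith, by linarith⟩ ⟨by linarith, by linarith⟩ (by linarith)

lemma my_phi_deriv_neg {r A : ℝ} (hr : 0 < r) {μ σ v : ℝ → ℝ}
    (hσpos : ∀ x ≥ (0:ℝ), 0 < σ x ^ 2)
    (hvC : ContDiff ℝ 2 v)
    (hvpos : ∀ x ≥ (0:ℝ), 0 < v x)
    (hvanti : AntitoneOn v (Ici (0:ℝ)))
    (hODE : ∀ x ≥ (0:ℝ),
      (1/2) * σ x ^ 2 * deriv (deriv v) x + (μ x - A) * deriv v x - r * v x = 0) :
    ∀ x ≥ (0:ℝ), deriv v x < 0 := by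
  have hd := (my_cd2 hvC).1
  have hle : ∀ y ≥ (0:ℝ), deriv v y ≤ 0 := by
    intro y hy
    apply my_deriv_nonpos_right (hd y)
    filter_upwards [self_mem_nhdsWithin] with t ht
    exact hvanti (mem_Ici.2 hy) (mem_Ici.2 (hy.trans (le_of_lt ht))) (le_of_lt ht)
  intro x hx
  rcases lt_or_eq_of_le (hle x hx) with h | h
  · exact h
  · exfalso
    have heq := hODE x hx
    rw [h] at heq
    have hD : 0 < deriv (deriv v) x := by
      nlinarith [hσpos x hx, mul_pos hr (hvpos x hx)]
    obtain ⟨y, hyI, hy⟩ := my_deriv_lt_right hvC one_pos hD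
    have : deriv v y ≤ 0 := hle y (le_of_lt (lt_of_le_of_lt hx hyI.1))
    rw [← h] at this
    linarith

lemma my_psi_deriv_pos {r : ℝ} (hr : 0 < r) {μ σ ψ : ℝ → ℝ}
    (hσpos : ∀ x ≥ (0:ℝ), 0 < σ x ^ 2)
    (hψC : ContDiff ℝ 2 ψ)
    (hψd0 : deriv ψ 0 = 1)
    (hψpos : ∀ x > (0:ℝ), 0 < ψ x)
    (hψmono : MonotoneOn ψ (Ici (0:ℝ)))
    (hODE : ∀ x ≥ (0:ℝ),
      (1/2) * σ x ^ 2 * deriv (deriv ψ) x + μ x * deriv ψ x - r * ψ x = 0) :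
    ∀ x ≥ (0:ℝ), 0 < deriv ψ x := by
  have hd := (my_cd2 hψC).1
  have hge : ∀ y ≥ (0:ℝ), 0 ≤ deriv ψ y := by
    intro y hy
    apply my_deriv_nonneg_right (hd y)
    filter_upwards [self_mem_nhdsWithin] with t ht
    exact hψmono (mem_Ici.2 hy) (mem_Ici.2 (hy.trans (le_of_lt ht))) (le_of_lt ht)
  intro x hx
  rcases eq_or_lt_of_le hx with h0 | h0
  · rw [← h0, hψd0]; exact one_pos
  rcases eq_or_lt_of_le (hge x hx) with h | h
  · exfalso
    have heq := hODE x hx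
    rw [← h] at heq
    have hD : 0 < deriv (deriv ψ) x := by
      nlinarith [hσpos x hx, mul_pos hr (hψpos x h0)]
    obtain ⟨y, hyI, hy⟩ := my_deriv_lt_left hψC h0 hD
    have h1 : 0 ≤ deriv ψ y := hge y (by have := hyI.1; linarith)
    rw [← h] at hy
    linarith
  · exact h
lemma my_second_deriv_nonneg {f : ℝ → ℝ} {x : ℝ} (hf : ContDiff ℝ 2 f)
    (h : IsLocalMin f x) : 0 ≤ deriv (deriv f) x := by
  obtain ⟨hd, hd1, hc2⟩ := my_cd2 hf
  by_contra hneg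
  push_neg at hneg
  have hnbhd : ∀ᶠ y in nhds x, deriv (deriv f) y < 0 :=
    hc2.continuousAt.eventually_lt (continuousAt_const) hneg
  have hloc : ∀ᶠ y in nhds x, deriv (deriv f) y < 0 ∧ f x ≤ f y := hnbhd.and h
  obtain ⟨ε, hε, hball⟩ := Metric.eventually_nhds_iff_ball.1 hloc
  have hmem : ∀ y ∈ Ioo (x - ε) (x + ε), y ∈ Metric.ball x ε := by
    intro y hy
    rw [Metric.mem_ball, Real.dist_eq, abs_lt]
    constructor <;> [linarith [hy.1]; linarith [hy.2]]
  have hanti : StrictAntiOn (deriv f) (Ioo (x - ε) (x + ε)) := by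
    apply strictAntiOn_of_deriv_neg (convex_Ioo _ _) (hd1.continuous.continuousOn)
    intro y hy
    rw [interior_Ioo] at hy
    exact (hball y (hmem y hy)).1
  have hx0 : deriv f x = 0 := h.deriv_eq_zero
  set y := x - ε / 2 with hy
  have hyltx : y < x := by simp [hy]; linarith
  have hyI : y ∈ Ioo (x - ε) (x + ε) := by constructor <;> simp [hy] <;> linarith
  have hxI : x ∈ Ioo (x - ε) (x + ε) := by constructor <;> linarith
  have hmono : StrictMonoOn f (Icc y x) := by
    apply strictMonoOn_of_deriv_pos (convex_Icc _ _) hd.continuous.continuousOn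
    intro t ht
    rw [interior_Icc] at ht
    have htI : t ∈ Ioo (x - ε) (x + ε) := ⟨by have := ht.1; simp [hy] at this ⊢; linarith, by linarith [ht.2]⟩
    have := hanti htI hxI ht.2
    rwa [hx0] at this
  have hyx : f y < f x :=
    hmono (left_mem_Icc.2 hyltx.le) (right_mem_Icc.2 hyltx.le) hyltx
  have : f x ≤ f y := (hball y (hmem y hyI)).2
  linarith

lemma my_key_ineq {r A1 A2 : ℝ} (hr : 0 < r) (hA : A1 ≤ A2) {μ σ u v : ℝ → ℝ}
    (hσpos : ∀ x ≥ (0:ℝ), 0 < σ x ^ 2)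
    (huC : ContDiff ℝ 2 u) (hvC : ContDiff ℝ 2 v)
    (hupos : ∀ x ≥ (0:ℝ), 0 < u x) (hvpos : ∀ x ≥ (0:ℝ), 0 < v x)
    (hvd : ∀ x ≥ (0:ℝ), deriv v x ≤ 0)
    (hulim : Tendsto u atTop (nhds 0)) (hvlim : Tendsto v atTop (nhds 0))
    (huODE : ∀ x ≥ (0:ℝ),
      (1/2) * σ x ^ 2 * deriv (deriv u) x + (μ x - A1) * deriv u x - r * u x = 0)
    (hvODE : ∀ x ≥ (0:ℝ),
      (1/2) * σ x ^ 2 * deriv (deriv v) x + (μ x - A2) * deriv v x - r * v x = 0)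
    {x₀ : ℝ} (hx₀ : 0 ≤ x₀) :
    v x₀ * deriv u x₀ ≤ u x₀ * deriv v x₀ := by
  obtain ⟨hud, hud1, -⟩ := my_cd2 huC
  obtain ⟨hvd', hvd1, -⟩ := my_cd2 hvC
  obtain ⟨a, ha⟩ : ∃ a : ℝ, a = u x₀ := ⟨_, rfl⟩
  obtain ⟨b, hb⟩ : ∃ b : ℝ, b = v x₀ := ⟨_, rfl⟩
  have hapos : 0 < a := ha ▸ hupos x₀ hx₀
  have hbpos : 0 < b := hb ▸ hvpos x₀ hx₀
  have hzC : ContDiff ℝ 2 (fun t => a * v t - b * u t) :=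
    (contDiff_const.mul hvC).sub (contDiff_const.mul huC)
  obtain ⟨hzd, hzd1, -⟩ := my_cd2 hzC
  have hz' : ∀ t, deriv (fun t => a * v t - b * u t) t = a * deriv v t - b * deriv u t := by
    intro t
    rw [deriv_fun_sub ((hvd' t).const_mul a) ((hud t).const_mul b),
      deriv_const_mul a (hvd' t), deriv_const_mul b (hud t)]
  have hz'' : ∀ t, deriv (deriv (fun t => a * v t - b * u t)) t
      = a * deriv (deriv v) t - b * deriv (deriv u) t := by
    intro t
    have h1 : deriv (fun t => a * v t - b * u t) = fun s => a * deriv v s - b * deriv u s :=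
      funext hz'
    rw [h1, deriv_fun_sub ((hvd1 t).const_mul a) ((hud1 t).const_mul b),
      deriv_const_mul a (hvd1 t), deriv_const_mul b (hud1 t)]
  have hz0 : a * v x₀ - b * u x₀ = 0 := by rw [ha, hb]; ring
  -- z ≥ 0 on [x₀, ∞)
  have znn : ∀ y ≥ x₀, 0 ≤ a * v y - b * u y := by
    by_contra hcon
    push_neg at hcon
    obtain ⟨y, hyx₀, hyneg⟩ := hcon
    have hzlim : Tendsto (fun t => a * v t - b * u t) atTop (nhds 0) := by
      have : Tendsto (fun t => a * v t - b * u t) atTop (nhds (a * 0 - b * 0)) :=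
        ((hvlim.const_mul a).sub (hulim.const_mul b))
      simpa using this
    have hhalf : (a * v y - b * u y) / 2 < 0 := div_neg_of_neg_of_pos hyneg two_pos
    have hev : ∀ᶠ t in atTop, (a * v y - b * u y) / 2 < a * v t - b * u t :=
      hzlim.eventually (eventually_gt_nhds hhalf)
    obtain ⟨R₀, hR₀⟩ := eventually_atTop.1 hev
    have hyR : y ≤ max R₀ y := le_max_right _ _
    have hx₀R : x₀ ≤ max R₀ y := hyx₀.trans hyR
    obtain ⟨xs, hxsI, hxsmin⟩ :=
      isCompact_Icc.exists_isMinOn (nonempty_Icc.2 hx₀R) (hzd.continuous.continuousOn)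
    have hxs_le : a * v xs - b * u xs ≤ a * v y - b * u y := hxsmin ⟨hyx₀, hyR⟩
    have hxsneg : a * v xs - b * u xs < 0 := lt_of_le_of_lt hxs_le hyneg
    have hxs_ne_l : x₀ ≠ xs := by
      intro h; rw [← h, hz0] at hxsneg; exact absurd hxsneg (lt_irrefl 0)
    have hxs_ne_r : xs ≠ max R₀ y := by
      intro h
      have h2 : (a * v y - b * u y) / 2 < a * v (max R₀ y) - b * u (max R₀ y) :=
        hR₀ _ (le_max_left _ _)
      rw [← h] at h2
      linarith
    have hxs_int : xs ∈ Ioo x₀ (max R₀ y) :=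
      ⟨lt_of_le_of_ne hxsI.1 hxs_ne_l, lt_of_le_of_ne hxsI.2 hxs_ne_r⟩
    have hlocmin : IsLocalMin (fun t => a * v t - b * u t) xs :=
      hxsmin.isLocalMin (Icc_mem_nhds hxs_int.1 hxs_int.2)
    have hd0 : a * deriv v xs - b * deriv u xs = 0 := by
      rw [← hz' xs]; exact hlocmin.deriv_eq_zero
    have hd2 : 0 ≤ a * deriv (deriv v) xs - b * deriv (deriv u) xs := by
      rw [← hz'' xs]; exact my_second_deriv_nonneg hzC hlocmin
    have hxs0 : (0:ℝ) ≤ xs := hx₀.trans hxsI.1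
    have hu := huODE xs hxs0
    have hv := hvODE xs hxs0
    have hσ := hσpos xs hxs0
    have hforced : (1/2) * σ xs ^ 2 * (a * deriv (deriv v) xs - b * deriv (deriv u) xs)
        + (μ xs - A1) * (a * deriv v xs - b * deriv u xs)
        - r * (a * v xs - b * u xs) = a * (A2 - A1) * deriv v xs := by
      linear_combination a * hv - b * hu
    have hrhs : a * (A2 - A1) * deriv v xs ≤ 0 :=
      mul_nonpos_of_nonneg_of_nonpos
        (mul_nonneg hapos.le (by linarith)) (hvd xs hxs0)
    rw [hd0] at hforced
    nlinarith [mul_nonneg (le_of_lt hσ) hd2]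
  -- conclude: deriv z x₀ ≥ 0
  have hdz : 0 ≤ deriv (fun t => a * v t - b * u t) x₀ := by
    apply my_deriv_nonneg_right (hzd x₀)
    filter_upwards [self_mem_nhdsWithin] with t ht
    show a * v x₀ - b * u x₀ ≤ a * v t - b * u t
    rw [hz0]
    exact znn t (le_of_lt ht)
  rw [hz' x₀] at hdz
  rw [← ha, ← hb]
  linarith

/-- For large `A`, the slope condition at 0 must fail. -/
lemma my_big_A {r K A : ℝ} (hr : 0 < r) (hK : 0 < K) {μ σ v : ℝ → ℝ}
    (hσpos : ∀ x ≥ (0:ℝ), 0 < σ x ^ 2)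
    (hvC : ContDiff ℝ 2 v) (hv0 : v 0 = 1)
    (hvpos : ∀ x ≥ (0:ℝ), 0 < v x)
    (hvanti : AntitoneOn v (Ici (0:ℝ)))
    (hODE : ∀ x ≥ (0:ℝ),
      (1/2) * σ x ^ 2 * deriv (deriv v) x + (μ x - A) * deriv v x - r * v x = 0)
    (hbig : ∀ x ∈ Icc (0:ℝ) (K/r), μ x + 2 * K ≤ A) :
    ¬ (deriv v 0 < -(r/K)) := by
  intro hcon
  obtain ⟨hvd, hvd1, hvc2⟩ := my_cd2 hvC
  have hT : (0:ℝ) < K / r := div_pos hK hr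
  have hvle1 : ∀ x ≥ (0:ℝ), v x ≤ 1 := by
    intro x hx
    rw [← hv0]
    exact hvanti (mem_Ici.2 le_rfl) (mem_Ici.2 hx) hx
  have hclaim : ∀ t ∈ Icc (0:ℝ) (K/r), deriv v t < -(r/K) := by
    by_contra hcon2
    push_neg at hcon2
    obtain ⟨t₁, ht₁I, ht₁⟩ := hcon2
    have hSne : (Icc (0:ℝ) (K/r) ∩ (deriv v) ⁻¹' (Ici (-(r/K)))).Nonempty :=
      ⟨t₁, ht₁I, ht₁⟩
    have hSbdd : BddBelow (Icc (0:ℝ) (K/r) ∩ (deriv v) ⁻¹' (Ici (-(r/K)))) :=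
      ⟨0, fun t ht => ht.1.1⟩
    have hSclosed : IsClosed (Icc (0:ℝ) (K/r) ∩ (deriv v) ⁻¹' (Ici (-(r/K)))) :=
      isClosed_Icc.inter (isClosed_Ici.preimage hvd1.continuous)
    obtain ⟨htsI, htsV⟩ := hSclosed.csInf_mem hSne hSbdd
    set ts := sInf (Icc (0:ℝ) (K/r) ∩ (deriv v) ⁻¹' (Ici (-(r/K)))) with hts
    have hts0 : (0:ℝ) ≤ ts := htsI.1
    have htspos : 0 < ts := by
      rcases eq_or_lt_of_le hts0 with h | h
      · exfalso
        have : -(r/K) ≤ deriv v 0 := by rw [h]; exact htsV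
        linarith
      · exact h
    have hlt : ∀ s, 0 ≤ s → s < ts → deriv v s < -(r/K) := by
      intro s hs0 hsts
      by_contra hge
      push_neg at hge
      have hsmem : s ∈ Icc (0:ℝ) (K/r) ∩ (deriv v) ⁻¹' (Ici (-(r/K))) :=
        ⟨⟨hs0, hsts.le.trans htsI.2⟩, hge⟩
      have := csInf_le hSbdd hsmem
      rw [← hts] at this
      linarith
    have hIoo : Ioo (0:ℝ) ts ∈ nhdsWithin ts (Iio ts) :=
      Ioo_mem_nhdsLT_of_mem ⟨htspos, le_rfl⟩
    have hle : deriv v ts ≤ -(r/K) := by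
      have htd : Tendsto (deriv v) (nhdsWithin ts (Iio ts)) (nhds (deriv v ts)) :=
        (hvd1.continuous.continuousAt).mono_left nhdsWithin_le_nhds
      refine le_of_tendsto htd ?_
      filter_upwards [hIoo] with s hs
      exact (hlt s hs.1.le hs.2).le
    have hdvt : deriv v ts = -(r/K) := le_antisymm hle htsV
    have hD : deriv (deriv v) ts < 0 := by
      have heq := hODE ts hts0
      have hbig' := hbig ts htsI
      have hv1 := hvle1 ts hts0
      have hσ := hσpos ts hts0
      rw [hdvt] at heq
      -- (1/2)σ²D = r v ts + (μ ts - A) * (r/K) ≤ r - 2K*(r/K) = -r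
      have h2 : (μ ts - A) * (r / K) ≤ -(2 * r) := by
        have h3 : μ ts - A ≤ -(2*K) := by linarith
        have := mul_le_mul_of_nonneg_right h3 (le_of_lt (div_pos hr hK))
        calc (μ ts - A) * (r/K) ≤ -(2*K) * (r/K) := this
        _ = -(2 * (K * (r/ K))) := by ring
        _ = -(2*r) := by rw [mul_div_cancel₀ r (ne_of_gt hK)]
      nlinarith
    have hslope : 0 ≤ deriv (deriv v) ts := by
      apply my_deriv_nonneg_left (hvd1 ts)
      filter_upwards [hIoo] with s hs
      rw [hdvt]
      exact (hlt s hs.1.le hs.2).le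
    linarith
  obtain ⟨cc, hccI, hcc⟩ := exists_deriv_eq_slope v hT
    (hvd.continuous.continuousOn) (hvd.differentiableOn)
  have h1 : deriv v cc < -(r/K) := hclaim cc ⟨hccI.1.le, hccI.2.le⟩
  rw [hcc, hv0] at h1
  have h2 : (v (K/r) - 1) / (K/r - 0) < -(r/K) := h1
  have h3 : v (K/r) - 1 < -(r/K) * (K/r) := by
    rw [div_lt_iff₀ (by linarith : (0:ℝ) < K/r - 0)] at h2
    calc v (K/r) - 1 < -(r/K) * (K/r - 0) := h2
    _ = -(r/K) * (K/r) := by ring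
  have h4 : -(r/K) * (K/r) = -1 := by
    field_simp
  have h5 : v (K/r) < 0 := by rw [h4] at h3; linarith
  exact absurd (hvpos (K/r) hT.le) (not_lt.2 h5.le)


/-- with fixed individual maximal extraction rate K, the equilibrium
threshold b̂(n) (the unique positive solution of f_n(b) = K/r when φ_{nK}'(0) < −r/K,
and 0 otherwise) is nonincreasing in the number n of agents, and there is n̄ such
that b̂(n) > 0 for n < n̄ and b̂(n) = 0 for n ≥ n̄. -/
theorem stmt_1
    (r c : ℝ) (hr : 0 < r) (hc : 0 < c)
    (μ σ : ℝ → ℝ) (hμ : ContDiff ℝ 1 μ) (hσ : ContDiff ℝ 1 σ)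
    (hσpos : ∀ x ≥ (0:ℝ), 0 < σ x ^ 2)
    (hμderiv : ∀ x ≥ (0:ℝ), deriv μ x < r)
    (hμ0 : 0 < μ 0)
    (hμc : ∀ x ≥ c, μ x ≤ r * x - 1 / c)
    (ψ : ℝ → ℝ) (hψC : ContDiff ℝ 3 ψ)
    (hψ0 : ψ 0 = 0) (hψd0 : deriv ψ 0 = 1)
    (hψpos : ∀ x > (0:ℝ), 0 < ψ x)
    (hψmono : MonotoneOn ψ (Ici (0:ℝ)))
    (hψODE : ∀ x ≥ (0:ℝ),
      (1/2) * σ x ^ 2 * deriv (deriv ψ) x + μ x * deriv ψ x - r * ψ x = 0)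
    (φ : ℝ → ℝ → ℝ)
    (hφC : ∀ A ≥ (0:ℝ), ContDiff ℝ 2 (φ A))
    (hφ0 : ∀ A ≥ (0:ℝ), φ A 0 = 1)
    (hφpos : ∀ A ≥ (0:ℝ), ∀ x ≥ (0:ℝ), 0 < φ A x)
    (hφanti : ∀ A ≥ (0:ℝ), AntitoneOn (φ A) (Ici (0:ℝ)))
    (hφlim : ∀ A ≥ (0:ℝ), Tendsto (φ A) atTop (nhds 0))
    (hφODE : ∀ A ≥ (0:ℝ), ∀ x ≥ (0:ℝ),
      (1/2) * σ x ^ 2 * deriv (deriv (φ A)) x + (μ x - A) * deriv (φ A) x - r * φ A x = 0)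
    (K : ℝ) (hK : 0 < K)
    (bhat : ℕ → ℝ)
    (hbhat : ∀ n : ℕ, 1 ≤ n →
      (deriv (φ ((n : ℝ) * K)) 0 < -(r / K) →
        0 < bhat n ∧
        ψ (bhat n) / deriv ψ (bhat n)
          - φ ((n : ℝ) * K) (bhat n) / deriv (φ ((n : ℝ) * K)) (bhat n) = K / r ∧
        (∀ b' : ℝ, 0 < b' →
          ψ b' / deriv ψ b'
            - φ ((n : ℝ) * K) b' / deriv (φ ((n : ℝ) * K)) b' = K / r → b' = bhat n)) ∧
      (¬ deriv (φ ((n : ℝ) * K)) 0 < -(r / K) → bhat n = 0)) :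
    (∀ m n : ℕ, 1 ≤ m → m ≤ n → bhat n ≤ bhat m) ∧
    ∃ nbar : ℕ, ∀ n : ℕ, 1 ≤ n →
      (n < nbar → 0 < bhat n) ∧ (nbar ≤ n → bhat n = 0) := by
  have hψC2 : ContDiff ℝ 2 ψ := hψC.of_le (by norm_num)
  have hA : ∀ n : ℕ, (0:ℝ) ≤ (n:ℝ) * K := fun n => mul_nonneg (Nat.cast_nonneg n) hK.le
  have hψd : ∀ x ≥ (0:ℝ), 0 < deriv ψ x :=
    my_psi_deriv_pos hr hσpos hψC2 hψd0 hψpos hψmono hψODE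
  have hφd : ∀ n : ℕ, ∀ x ≥ (0:ℝ), deriv (φ ((n:ℝ)*K)) x < 0 := fun n =>
    my_phi_deriv_neg hr hσpos (hφC _ (hA n)) (hφpos _ (hA n)) (hφanti _ (hA n))
      (hφODE _ (hA n))
  have hbnn : ∀ n : ℕ, 1 ≤ n → 0 ≤ bhat n := by
    intro n hn
    obtain ⟨h1, h2⟩ := hbhat n hn
    by_cases hC : deriv (φ ((n : ℝ) * K)) 0 < -(r / K)
    · exact (h1 hC).1.le
    · rw [h2 hC]
  have hkey : ∀ m n : ℕ, m ≤ n → ∀ x₀ ≥ (0:ℝ),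
      φ ((n:ℝ)*K) x₀ * deriv (φ ((m:ℝ)*K)) x₀
        ≤ φ ((m:ℝ)*K) x₀ * deriv (φ ((n:ℝ)*K)) x₀ := by
    intro m n hmn x₀ hx₀
    exact my_key_ineq hr
      (mul_le_mul_of_nonneg_right (Nat.cast_le.2 hmn) hK.le) hσpos
      (hφC _ (hA m)) (hφC _ (hA n)) (hφpos _ (hA m)) (hφpos _ (hA n))
      (fun x hx => (hφd n x hx).le) (hφlim _ (hA m)) (hφlim _ (hA n))
      (hφODE _ (hA m)) (hφODE _ (hA n)) hx₀
  have hmono : ∀ m n : ℕ, 1 ≤ m → m ≤ n → bhat n ≤ bhat m := by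
    intro m n h1m hmn
    have h1n : 1 ≤ n := h1m.trans hmn
    by_cases hCn : deriv (φ ((n : ℝ) * K)) 0 < -(r / K)
    · obtain ⟨hbnpos, hfn, huniqn⟩ := (hbhat n h1n).1 hCn
      have hCm : deriv (φ ((m : ℝ) * K)) 0 < -(r / K) := by
        have hk0 := hkey m n hmn 0 le_rfl
        rw [hφ0 _ (hA m), hφ0 _ (hA n), one_mul, one_mul] at hk0
        linarith
      obtain ⟨hbmpos, hfm, huniqm⟩ := (hbhat m h1m).1 hCm
      by_contra hlt
      push_neg at hlt
      have hβ0 : (0:ℝ) ≤ bhat m := hbmpos.le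
      have hk := hkey m n hmn (bhat m) hβ0
      have hu'neg := hφd m (bhat m) hβ0
      have hv'neg := hφd n (bhat m) hβ0
      have hupos := hφpos _ (hA m) (bhat m) hβ0
      have hvpos := hφpos _ (hA n) (bhat m) hβ0
      have hdiff : 0 ≤ φ ((m:ℝ)*K) (bhat m) / deriv (φ ((m:ℝ)*K)) (bhat m)
          - φ ((n:ℝ)*K) (bhat m) / deriv (φ ((n:ℝ)*K)) (bhat m) := by
        rw [div_sub_div _ _ (ne_of_lt hu'neg) (ne_of_lt hv'neg)]
        apply div_nonneg
        · linarith
        · exact (mul_pos_of_neg_of_neg hu'neg hv'neg).le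
      have hfnβ : K/r ≤ ψ (bhat m) / deriv ψ (bhat m)
          - φ ((n:ℝ)*K) (bhat m) / deriv (φ ((n:ℝ)*K)) (bhat m) := by
        linarith [hfm]
      have hfn0 : ψ 0 / deriv ψ 0 - φ ((n:ℝ)*K) 0 / deriv (φ ((n:ℝ)*K)) 0 < K/r := by
        rw [hψ0, hψd0, hφ0 _ (hA n)]
        have hd0neg : deriv (φ ((n:ℝ)*K)) 0 < 0 := hφd n 0 le_rfl
        have h1 : 0 < -(deriv (φ ((n:ℝ)*K)) 0) := by linarith
        have h2 : r/K < -(deriv (φ ((n:ℝ)*K)) 0) := by linarith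
        have h3 : (-(deriv (φ ((n:ℝ)*K)) 0))⁻¹ < (r/K)⁻¹ :=
          inv_strictAnti₀ (div_pos hr hK) h2
        rw [inv_div] at h3
        have h4 : 0 / (1:ℝ) - 1 / deriv (φ ((n:ℝ)*K)) 0
            = (-(deriv (φ ((n:ℝ)*K)) 0))⁻¹ := by
          rw [zero_div, zero_sub, inv_neg, one_div]
        rw [h4]
        exact h3
      -- IVT on [0, bhat m]
      have hψcont : Continuous ψ := hψC.continuous
      have hψdcont : Continuous (deriv ψ) := (my_cd2 hψC2).2.1.continuous
      have hφncont : Continuous (φ ((n:ℝ)*K)) := (hφC _ (hA n)).continuous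
      have hφndcont : Continuous (deriv (φ ((n:ℝ)*K))) := (my_cd2 (hφC _ (hA n))).2.1.continuous
      have hIcc : Icc (0:ℝ) (bhat m) ⊆ Ici (0:ℝ) := fun x hx => hx.1
      have hgcont : ContinuousOn
          (fun x => ψ x / deriv ψ x - φ ((n:ℝ)*K) x / deriv (φ ((n:ℝ)*K)) x)
          (Icc 0 (bhat m)) := by
        apply ContinuousOn.sub
        · exact ContinuousOn.div hψcont.continuousOn hψdcont.continuousOn
            (fun x hx => ne_of_gt (hψd x (hIcc hx)))
        · exact ContinuousOn.div hφncont.continuousOn hφndcont.continuousOn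
            (fun x hx => ne_of_lt (hφd n x (hIcc hx)))
      have hmem : K/r ∈ Icc
          (ψ 0 / deriv ψ 0 - φ ((n:ℝ)*K) 0 / deriv (φ ((n:ℝ)*K)) 0)
          (ψ (bhat m) / deriv ψ (bhat m)
            - φ ((n:ℝ)*K) (bhat m) / deriv (φ ((n:ℝ)*K)) (bhat m)) :=
        ⟨hfn0.le, hfnβ⟩
      obtain ⟨b', hb'I, hb'⟩ := intermediate_value_Icc hβ0 hgcont hmem
      have hb'2 : ψ b' / deriv ψ b' - φ ((n:ℝ)*K) b' / deriv (φ ((n:ℝ)*K)) b' = K / r := hb'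
      have hb'pos : 0 < b' := by
        rcases eq_or_lt_of_le hb'I.1 with h | h
        · exfalso
          rw [← h] at hb'2
          rw [hb'2] at hfn0
          exact absurd hfn0 (lt_irrefl _)
        · exact h
      have hbeq : b' = bhat n := huniqn b' hb'pos hb'2
      have : b' ≤ bhat m := hb'I.2
      rw [hbeq] at this
      linarith
    · rw [(hbhat n h1n).2 hCn]
      exact hbnn m h1m
  refine ⟨hmono, ?_⟩
  -- existence of a zero
  have hT : (0:ℝ) < K / r := div_pos hK hr
  obtain ⟨xm, hxmI, hxmax⟩ := isCompact_Icc.exists_isMaxOn (nonempty_Icc.2 hT.le)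
    (hμ.continuous.continuousOn)
  obtain ⟨n₀', hn₀'⟩ := exists_nat_ge ((μ xm + 2*K)/K)
  have hn₀1 : 1 ≤ max n₀' 1 := le_max_right _ _
  have hbig : ∀ x ∈ Icc (0:ℝ) (K/r), μ x + 2 * K ≤ ((max n₀' 1 : ℕ):ℝ) * K := by
    intro x hx
    have h1 : μ x ≤ μ xm := hxmax hx
    have h2 : (μ xm + 2*K)/K ≤ ((max n₀' 1 : ℕ):ℝ) :=
      hn₀'.trans (Nat.cast_le.2 (le_max_left _ _))
    rw [div_le_iff₀ hK] at h2
    linarith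
  have hzero : bhat (max n₀' 1) = 0 := by
    apply (hbhat _ hn₀1).2
    exact my_big_A hr hK hσpos (hφC _ (hA _)) (hφ0 _ (hA _)) (hφpos _ (hA _))
      (hφanti _ (hA _)) (hφODE _ (hA _)) hbig
  have hex : ∃ n : ℕ, 1 ≤ n ∧ bhat n = 0 := ⟨max n₀' 1, hn₀1, hzero⟩
  refine ⟨Nat.find hex, ?_⟩
  intro n hn
  constructor
  · intro hlt
    have hne : ¬(1 ≤ n ∧ bhat n = 0) := Nat.find_min hex hlt
    by_cases hC : deriv (φ ((n : ℝ) * K)) 0 < -(r / K)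
    · exact ((hbhat n hn).1 hC).1
    · exact absurd ⟨hn, (hbhat n hn).2 hC⟩ hne
  · intro hge
    obtain ⟨h1nbar, hzb⟩ := Nat.find_spec hex
    have h1 := hmono (Nat.find hex) n h1nbar hge
    rw [hzb] at h1
    exact le_antisymm h1 (hbnn n hn)
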